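/- If φ is a conditional density of X₁ given (X₂, …, X_d) and u = (u₁, …, u_d) is a weight vector with u₁ ≠ 0, then the function t ↦ |u₁|⁻¹ · E[φ(u₁⁻¹(t − Σ_{j=2}^d u_j X_j), X₂, …, X_d)] is a probability density of the random variable Σ_{i=1}^d u_i X_i. -/

import Mathlib

open MeasureTheory ProbabilityTheory ENNReal
open scoped ENNReal

/-- `φ : ℝ → (Fin m → ℝ) → ℝ` is a conditional density of `X₁` given the vector `Y`:
for all Borel `A ⊆ ℝ`, `B ⊆ ℝ^m`,
`P(X₁ ∈ A, Y ∈ B) = E[1_{Y ∈ B} ∫_A φ(t, Y) dt]`. -/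
def IsCondDensity {Ω : Type*} [MeasurableSpace Ω] (μ : Measure Ω)
    {m : ℕ} (X1 : Ω → ℝ) (Y : Ω → (Fin m → ℝ)) (φ : ℝ → (Fin m → ℝ) → ℝ) : Prop :=
  Measurable (Function.uncurry φ) ∧ (∀ t x, 0 ≤ φ t x) ∧
    ∀ A : Set ℝ, MeasurableSet A → ∀ B : Set (Fin m → ℝ), MeasurableSet B →
      (μ {ω | X1 ω ∈ A ∧ Y ω ∈ B}).toReal
        = ∫ ω in {ω | Y ω ∈ B}, ∫ t in A, φ t (Y ω) ∂(volume) ∂μ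

/-- Change of variables for an affine map on `ℝ`. -/
lemma cov_aux (u1 : ℝ) (hu1 : u1 ≠ 0) (c : ℝ) (g : ℝ → ℝ≥0∞) (hg : Measurable g)
    (A : Set ℝ) (hA : MeasurableSet A) :
    ∫⁻ t in (fun t => u1 * t + c) ⁻¹' A, g t ∂volume
      = ∫⁻ s in A, ENNReal.ofReal (|u1|⁻¹) * g (u1⁻¹ * (s - c)) ∂volume := by
  have hT : Measurable fun t : ℝ => u1 * t + c :=
    (measurable_const_mul u1).add_const c
  have hmap : Measure.map (fun t : ℝ => u1 * t + c) volume
      = ENNReal.ofReal |u1⁻¹| • volume := by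
    have : (fun t : ℝ => u1 * t + c) = (fun x : ℝ => x + c) ∘ (fun t : ℝ => u1 * t) := rfl
    rw [this, ← Measure.map_map (measurable_add_const c) (measurable_const_mul u1),
      Real.map_volume_mul_left hu1, Measure.map_smul,
      (measurePreserving_add_right volume c).map_eq]
  have hgm : Measurable (A.indicator fun s => g (u1⁻¹ * (s - c))) :=
    (hg.comp ((measurable_id.sub_const c).const_mul u1⁻¹)).indicator hA
  have h1 : ∫⁻ t, A.indicator (fun s => g (u1⁻¹ * (s - c))) ((fun t : ℝ => u1 * t + c) t) ∂volume
      = ∫⁻ s, A.indicator (fun s => g (u1⁻¹ * (s - c))) s ∂(ENNReal.ofReal |u1⁻¹| • volume) := by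
    rw [← hmap, lintegral_map hgm hT]
  have hinv : ∀ t : ℝ, u1⁻¹ * (u1 * t + c - c) = t := by
    intro t; field_simp; ring
  calc ∫⁻ t in (fun t => u1 * t + c) ⁻¹' A, g t ∂volume
      = ∫⁻ t, ((fun t : ℝ => u1 * t + c) ⁻¹' A).indicator g t ∂volume := by
        rw [lintegral_indicator (hT hA)]
    _ = ∫⁻ t, A.indicator (fun s => g (u1⁻¹ * (s - c))) ((fun t : ℝ => u1 * t + c) t) ∂volume := by
        refine lintegral_congr fun t => ?_
        by_cases ht : u1 * t + c ∈ A
        · rw [Set.indicator_of_mem ht, Set.indicator_of_mem (by exact ht), hinv]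
        · rw [Set.indicator_of_notMem ht, Set.indicator_of_notMem (by exact ht)]
    _ = ENNReal.ofReal |u1⁻¹| * ∫⁻ s, A.indicator (fun s => g (u1⁻¹ * (s - c))) s ∂volume := by
        rw [h1, lintegral_smul_measure, smul_eq_mul]
    _ = ∫⁻ s in A, ENNReal.ofReal (|u1|⁻¹) * g (u1⁻¹ * (s - c)) ∂volume := by
        rw [lintegral_indicator hA, abs_inv]
        exact (lintegral_const_mul _ (hg.comp ((measurable_id.sub_const c).const_mul u1⁻¹))).symm

/-- If `φ` is a conditional density of `X₁` given `(X₂,…,X_d)` and `u₁ ≠ 0`, then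
`t ↦ |u₁|⁻¹ E[φ(u₁⁻¹(t - Σ_{j≥2} u_j X_j), X₂,…,X_d)]` is a density of `Σ_j u_j X_j`. -/
theorem stmt5 {Ω : Type*} [MeasurableSpace Ω] (μ : Measure Ω) [IsProbabilityMeasure μ]
    (m : ℕ) (hm : 1 ≤ m)
    (X1 : Ω → ℝ) (Y : Ω → (Fin m → ℝ)) (hX1 : Measurable X1) (hY : Measurable Y)
    (φ : ℝ → (Fin m → ℝ) → ℝ) (hφ : IsCondDensity μ X1 Y φ)
    (u1 : ℝ) (hu1 : u1 ≠ 0) (u : Fin m → ℝ) :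
    ∀ A : Set ℝ, MeasurableSet A →
      (μ {ω | u1 * X1 ω + ∑ i, u i * Y ω i ∈ A}).toReal
        = ∫ t in A, |u1|⁻¹ * ∫ ω, φ (u1⁻¹ * (t - ∑ i, u i * Y ω i)) (Y ω) ∂μ ∂(volume) := by
  intro A hA
  obtain ⟨hφm, hφ0, hφeq⟩ := hφ
  set ν : Measure (Fin m → ℝ) := μ.map Y with hν_def
  have hνprob : IsProbabilityMeasure ν := Measure.isProbabilityMeasure_map hY.aemeasurable
  -- measurability of sections of φ
  have hφy : ∀ y, Measurable fun t => φ t y := fun y =>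
    hφm.comp (measurable_id.prodMk measurable_const)
  have hφofm : Measurable fun p : ℝ × (Fin m → ℝ) => ENNReal.ofReal (φ p.1 p.2) :=
    ENNReal.measurable_ofReal.comp hφm
  -- G y = total mass of the density at y
  set G : (Fin m → ℝ) → ℝ≥0∞ := fun y => ∫⁻ t, ENNReal.ofReal (φ t y) with hG_def
  have hGm : Measurable G := hφofm.lintegral_prod_left'
  -- per-ω rewriting of inner Bochner integrals as lintegrals
  have hinner : ∀ (A' : Set ℝ) (y : Fin m → ℝ),
      ∫ t in A', φ t y ∂volume = (∫⁻ t in A', ENNReal.ofReal (φ t y) ∂volume).toReal := by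
    intro A' y
    rw [integral_eq_lintegral_of_nonneg_ae]
    · exact Filter.Eventually.of_forall fun t => hφ0 t y
    · exact ((hφy y).aestronglyMeasurable).restrict
  -- Step A: for all B, ν(B).toReal = ∫ y in B, (G y).toReal ∂ν
  have hstepA : ∀ B : Set (Fin m → ℝ), MeasurableSet B →
      (ν B).toReal = ∫ y in B, (G y).toReal ∂ν := by
    intro B hB
    have h0 := hφeq Set.univ MeasurableSet.univ B hB
    have hset : {ω | X1 ω ∈ Set.univ ∧ Y ω ∈ B} = Y ⁻¹' B := by
      ext ω; simp [Set.mem_preimage]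
    have hset2 : {ω | Y ω ∈ B} = Y ⁻¹' B := rfl
    rw [hset, hset2] at h0
    have h1 : ∫ ω in Y ⁻¹' B, ∫ t in Set.univ, φ t (Y ω) ∂volume ∂μ
        = ∫ ω in Y ⁻¹' B, (G (Y ω)).toReal ∂μ := by
      refine integral_congr_ae (Filter.Eventually.of_forall fun ω => ?_)
      dsimp only
      rw [hinner Set.univ (Y ω), Measure.restrict_univ]
    have h2 : ∫ ω in Y ⁻¹' B, (G (Y ω)).toReal ∂μ = ∫ y in B, (G y).toReal ∂ν := by
      rw [hν_def, setIntegral_map hB (hGm.ennreal_toReal.aestronglyMeasurable) hY.aemeasurable]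
    rw [hν_def, Measure.map_apply hY hB]
    rw [h0, h1, h2]
  -- Step B: integrability of toReal ∘ G
  have hGint : Integrable (fun y => (G y).toReal) ν := by
    by_contra hni
    have h1 := hstepA Set.univ MeasurableSet.univ
    rw [Measure.restrict_univ, integral_undef hni] at h1
    simp [measure_univ] at h1
  -- Step C: toReal ∘ G = 1 a.e.
  have hGae1 : (fun y => (G y).toReal) =ᵐ[ν] fun _ => (1 : ℝ) := by
    refine ae_eq_of_forall_setIntegral_eq_of_sigmaFinite
      (fun s hs _ => hGint.integrableOn) (fun s hs _ => (integrable_const 1).integrableOn)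
      fun s hs _ => ?_
    rw [← hstepA s hs, setIntegral_const, smul_eq_mul, mul_one]; rfl
  -- Step D: G ≠ ∞ a.e.
  have hGfin : ∀ᵐ y ∂ν, G y ≠ ∞ := by
    have hBmeas : MeasurableSet {y | G y = ∞} := hGm (measurableSet_singleton ∞)
    have h1 := hstepA _ hBmeas
    have h2 : ∫ y in {y | G y = ∞}, (G y).toReal ∂ν = 0 := by
      rw [setIntegral_congr_fun hBmeas (g := fun _ => (0:ℝ))
        (fun y hy => by simp [Set.mem_setOf_eq.mp hy])]
      simp
    rw [h2] at h1
    have h3 : ν {y | G y = ∞} = 0 := by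
      have := (ENNReal.toReal_eq_zero_iff _).mp h1
      rcases this with h | h
      · exact h
      · exact absurd h (measure_ne_top ν _)
    filter_upwards [measure_eq_zero_iff_ae_notMem.mp h3] with y hy
    exact hy
  -- G = 1 a.e.
  have hG1 : ∀ᵐ y ∂ν, G y = 1 := by
    filter_upwards [hGae1, hGfin] with y h1 h2
    rw [← ENNReal.ofReal_toReal h2, h1, ENNReal.ofReal_one]
  -- Step E: lintegral version of the conditional density property
  have hstepE : ∀ A' : Set ℝ, MeasurableSet A' → ∀ B : Set (Fin m → ℝ), MeasurableSet B →
      μ {ω | X1 ω ∈ A' ∧ Y ω ∈ B}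
        = ∫⁻ y in B, ∫⁻ t in A', ENNReal.ofReal (φ t y) ∂volume ∂ν := by
    intro A' hA' B hB
    set F : (Fin m → ℝ) → ℝ≥0∞ := fun y => ∫⁻ t in A', ENNReal.ofReal (φ t y) with hF_def
    have hFm : Measurable F :=
      Measurable.lintegral_prod_left' (μ := volume.restrict A') hφofm
    have hFleG : ∀ y, F y ≤ G y := fun y => lintegral_mono' Measure.restrict_le_self le_rfl
    have hFae : ∀ᵐ y ∂ν, F y ≤ 1 := by
      filter_upwards [hG1] with y h
      exact h ▸ hFleG y
    have h0 := hφeq A' hA' B hB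
    have hset2 : {ω | Y ω ∈ B} = Y ⁻¹' B := rfl
    rw [hset2] at h0
    have h1 : ∫ ω in Y ⁻¹' B, ∫ t in A', φ t (Y ω) ∂volume ∂μ
        = ∫ ω in Y ⁻¹' B, (fun y => (F y).toReal) (Y ω) ∂μ := by
      refine integral_congr_ae (Filter.Eventually.of_forall fun ω => ?_)
      dsimp only
      rw [hinner A' (Y ω)]
    have h2 : ∫ ω in Y ⁻¹' B, (fun y => (F y).toReal) (Y ω) ∂μ = ∫ y in B, (F y).toReal ∂ν := by
      rw [hν_def, setIntegral_map hB (hFm.ennreal_toReal.aestronglyMeasurable) hY.aemeasurable]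
    have h3 : ∫ y in B, (F y).toReal ∂ν = (∫⁻ y in B, F y ∂ν).toReal := by
      refine integral_toReal (hFm.aemeasurable.restrict) ?_
      exact ae_restrict_of_ae (hFae.mono fun y hy => lt_of_le_of_lt hy ENNReal.one_lt_top)
    have hfin : ∫⁻ y in B, F y ∂ν ≠ ∞ := by
      refine ne_of_lt (lt_of_le_of_lt ?_ ENNReal.one_lt_top)
      calc ∫⁻ y in B, F y ∂ν ≤ ∫⁻ y, F y ∂ν := lintegral_mono' Measure.restrict_le_self le_rfl
        _ ≤ ∫⁻ y, 1 ∂ν := lintegral_mono_ae hFae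
        _ = 1 := by simp [measure_univ]
    refine (ENNReal.toReal_eq_toReal_iff' (measure_ne_top μ _) hfin).mp ?_
    rw [h0, h1, h2, h3]
  -- Step F: the Markov kernel given by the (corrected) density
  set f : (Fin m → ℝ) → ℝ → ℝ≥0∞ := fun y t =>
    if G y = 1 then ENNReal.ofReal (φ t y) else (Set.Icc (0:ℝ) 1).indicator 1 t with hf_def
  have hfm : Measurable (Function.uncurry f) := by
    have h1 : MeasurableSet {p : (Fin m → ℝ) × ℝ | G p.1 = 1} :=
      (hGm.comp measurable_fst) (measurableSet_singleton 1)
    exact Measurable.ite h1 (hφofm.comp (measurable_snd.prodMk measurable_fst))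
      ((measurable_one.indicator measurableSet_Icc).comp measurable_snd)
  set κ : ProbabilityTheory.Kernel (Fin m → ℝ) ℝ :=
    ProbabilityTheory.Kernel.withDensity
      (ProbabilityTheory.Kernel.const (Fin m → ℝ) (volume : Measure ℝ)) f with hκ_def
  have hκapp : ∀ y, κ y = (volume : Measure ℝ).withDensity (f y) := by
    intro y
    rw [hκ_def, ProbabilityTheory.Kernel.withDensity_apply _ hfm,
      ProbabilityTheory.Kernel.const_apply]
  have hκmarkov : ProbabilityTheory.IsMarkovKernel κ := by
    constructor
    intro y
    constructor
    rw [hκapp y, withDensity_apply _ MeasurableSet.univ, Measure.restrict_univ]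
    by_cases hy : G y = 1
    · simp only [hf_def, hy, if_true]
      exact hy
    · simp only [hf_def, hy, if_false]
      rw [lintegral_indicator_one measurableSet_Icc, Real.volume_Icc]
      norm_num
  -- Step G: identification of the joint law
  have hpair : Measurable fun ω => (Y ω, X1 ω) := hY.prodMk hX1
  have hjoint : μ.map (fun ω => (Y ω, X1 ω)) = ν.compProd κ := by
    have hmapprob : IsProbabilityMeasure (μ.map fun ω => (Y ω, X1 ω)) :=
      Measure.isProbabilityMeasure_map hpair.aemeasurable
    have hcpprob : IsProbabilityMeasure (ν.compProd κ) := by infer_instance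
    refine MeasureTheory.ext_of_generate_finite _ generateFrom_prod.symm isPiSystem_prod ?_ ?_
    · rintro s ⟨B, hB, A', hA', rfl⟩
      simp only [Set.mem_setOf_eq] at hB hA'
      rw [Measure.map_apply hpair (hB.prod hA'), Measure.compProd_apply_prod hB hA']
      have hsets : (fun ω => (Y ω, X1 ω)) ⁻¹' (B ×ˢ A') = {ω | X1 ω ∈ A' ∧ Y ω ∈ B} := by
        ext ω; simp [Set.mem_prod, and_comm]
      rw [hsets, hstepE A' hA' B hB]
      refine lintegral_congr_ae (ae_restrict_of_ae ?_)
      filter_upwards [hG1] with y hy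
      rw [hκapp y, withDensity_apply _ hA']
      refine lintegral_congr fun t => ?_
      simp [hf_def, hy]
    · rw [measure_univ, measure_univ]
  -- Step H: the final computation
  set c : (Fin m → ℝ) → ℝ := fun y => ∑ i, u i * y i with hc_def
  have hcm : Measurable c :=
    Finset.measurable_sum Finset.univ fun i _ => by fun_prop
  have hSmeas : Measurable fun p : (Fin m → ℝ) × ℝ => u1 * p.2 + c p.1 :=
    (measurable_snd.const_mul u1).add (hcm.comp measurable_fst)
  have hSm : MeasurableSet {p : (Fin m → ℝ) × ℝ | u1 * p.2 + c p.1 ∈ A} := hSmeas hA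
  set q : (Fin m → ℝ) → ℝ → ℝ≥0∞ := fun y s =>
    ENNReal.ofReal (φ (u1⁻¹ * (s - c y)) y) with hq_def
  have hqm : Measurable (Function.uncurry q) := by
    have : Function.uncurry q = (fun p : ℝ × (Fin m → ℝ) => ENNReal.ofReal (φ p.1 p.2)) ∘
        (fun p : (Fin m → ℝ) × ℝ => (u1⁻¹ * (p.2 - c p.1), p.1)) := rfl
    rw [this]
    exact hφofm.comp
      (((measurable_snd.sub (hcm.comp measurable_fst)).const_mul u1⁻¹).prodMk measurable_fst)
  have hmain : μ {ω | u1 * X1 ω + ∑ i, u i * Y ω i ∈ A}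
      = ∫⁻ y, ∫⁻ s in A, ENNReal.ofReal (|u1|⁻¹) * q y s ∂volume ∂ν := by
    have hset : {ω | u1 * X1 ω + ∑ i, u i * Y ω i ∈ A}
        = (fun ω => (Y ω, X1 ω)) ⁻¹' {p : (Fin m → ℝ) × ℝ | u1 * p.2 + c p.1 ∈ A} := rfl
    rw [hset, ← Measure.map_apply hpair hSm, hjoint, Measure.compProd_apply hSm]
    refine lintegral_congr_ae ?_
    filter_upwards [hG1] with y hy
    have hpre : Prod.mk y ⁻¹' {p : (Fin m → ℝ) × ℝ | u1 * p.2 + c p.1 ∈ A}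
        = (fun t => u1 * t + c y) ⁻¹' A := rfl
    rw [hpre, hκapp y, withDensity_apply _ (((measurable_const_mul u1).add_const (c y)) hA)]
    have hfy : ∀ t, f y t = ENNReal.ofReal (φ t y) := fun t => by simp [hf_def, hy]
    rw [lintegral_congr hfy]
    exact cov_aux u1 hu1 (c y) _ ((hφy y).ennreal_ofReal) A hA
  have hswap : ∫⁻ y, ∫⁻ s in A, ENNReal.ofReal (|u1|⁻¹) * q y s ∂volume ∂ν
      = ∫⁻ s in A, ∫⁻ y, ENNReal.ofReal (|u1|⁻¹) * q y s ∂ν ∂volume := by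
    refine lintegral_lintegral_swap ?_
    exact ((measurable_const.mul hqm)).aemeasurable
  set H : ℝ → ℝ≥0∞ := fun s => ∫⁻ y, q y s ∂ν with hH_def
  have hHm : Measurable H :=
    Measurable.lintegral_prod_left' (μ := ν) hqm
  have hKeq : ∀ s, ∫⁻ y, ENNReal.ofReal (|u1|⁻¹) * q y s ∂ν = ENNReal.ofReal (|u1|⁻¹) * H s := by
    intro s
    exact lintegral_const_mul _ (hqm.comp (measurable_id.prodMk measurable_const))
  have hmain2 : μ {ω | u1 * X1 ω + ∑ i, u i * Y ω i ∈ A}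
      = ∫⁻ s in A, ENNReal.ofReal (|u1|⁻¹) * H s ∂volume := by
    rw [hmain, hswap]
    exact lintegral_congr fun s => hKeq s
  -- inner Bochner integral equals toReal of H
  have hinner2 : ∀ t : ℝ,
      ∫ ω, φ (u1⁻¹ * (t - ∑ i, u i * Y ω i)) (Y ω) ∂μ = (H t).toReal := by
    intro t
    have hmeasω : Measurable fun ω => φ (u1⁻¹ * (t - c (Y ω))) (Y ω) := by
      have : (fun ω => φ (u1⁻¹ * (t - c (Y ω))) (Y ω)) = Function.uncurry φ ∘
          (fun ω => (u1⁻¹ * (t - c (Y ω)), Y ω)) := rfl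
      rw [this]
      exact hφm.comp ((((hcm.comp hY).const_sub t).const_mul u1⁻¹).prodMk hY)
    rw [integral_eq_lintegral_of_nonneg_ae (Filter.Eventually.of_forall fun ω => hφ0 _ _)
      hmeasω.aestronglyMeasurable]
    have hmap := lintegral_map (μ := μ) (g := Y) (f := fun y => q y t)
      (hqm.comp (measurable_id.prodMk measurable_const)) hY
    congr 1
    exact hmap.symm
  have hKfin : ∀ᵐ s ∂(volume.restrict A), ENNReal.ofReal (|u1|⁻¹) * H s < ∞ := by
    refine ae_lt_top (measurable_const.mul hHm) ?_
    rw [← hmain2]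
    exact measure_ne_top μ _
  rw [hmain2]
  rw [← integral_toReal (f := fun s => ENNReal.ofReal (|u1|⁻¹) * H s) ((measurable_const.mul hHm).aemeasurable.restrict) hKfin]
  refine integral_congr_ae (Filter.Eventually.of_forall fun t => ?_)
  dsimp only
  rw [hinner2 t, ENNReal.toReal_mul, ENNReal.toReal_ofReal (inv_nonneg.mpr (abs_nonneg u1))]
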